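/- arXiv:2510.13503 — 2 statements merged into one kernel-verified Lean document; each statement's English description precedes it below -/
import Mathlib

section
/- For a regular cardinal κ, κ-small limits commute with κ-filtered colimits in the category of sets: for a κ-small category J and a κ-filtered category P, the canonical map colim_{p∈P} lim_{j∈J} F(j,p) → lim_{j∈J} colim_{p∈P} F(j,p) is a bijection for any functor F : J × P → Set. -/
open CategoryTheory CategoryTheory.Limits Cardinal

universe v

/-- A category is `κ`-small if its sets of objects and morphisms have cardinality `< κ`. -/
def IsKappaSmall (κ : Cardinal.{v}) (J : Type v) [SmallCategory J] : Prop :=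
  #J < κ ∧ #(Arrow J) < κ

/-- A category `P` is `κ`-filtered if every `κ`-small diagram in `P` admits a cocone. -/
def IsKappaFiltered (κ : Cardinal.{v}) (P : Type v) [SmallCategory P] : Prop :=
  ∀ (A : Type v) (_ : SmallCategory A), IsKappaSmall κ A → ∀ G : A ⥤ P, Nonempty (Cocone G)

section Span

variable {σ τ E : Type v} (s : E → σ) (t : E → τ)

inductive SpanHom : σ ⊕ τ → σ ⊕ τ → Type v
  | id (X : σ ⊕ τ) : SpanHom X X
  | edge (e : E) : SpanHom (.inl (s e)) (.inr (t e))

def SpanHom.comp : ∀ {X Y Z : σ ⊕ τ}, SpanHom s t X Y → SpanHom s t Y Z → SpanHom s t X Z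
  | _, _, _, .id _, g => g
  | _, _, _, .edge e, .id _ => .edge e

def spanCategory : SmallCategory (σ ⊕ τ) where
  Hom := SpanHom s t
  id := SpanHom.id
  comp := SpanHom.comp s t
  id_comp _ := rfl
  comp_id f := by cases f <;> rfl
  assoc f g h := by cases f <;> (try rfl) <;> cases g <;> rfl

lemma spanSmall (κ : Cardinal.{v}) (hκ : ℵ₀ ≤ κ)
    (hσ : #σ < κ) (hτ : #τ < κ) (hE : #E < κ) :
    letI := spanCategory s t
    IsKappaSmall κ (σ ⊕ τ) := by
  letI := spanCategory s t
  constructor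
  · simpa using Cardinal.add_lt_of_lt hκ hσ hτ
  · have key : #(Arrow (σ ⊕ τ)) ≤ #((σ ⊕ τ) ⊕ E) := by
      apply Cardinal.mk_le_of_injective
        (f := fun a : Arrow (σ ⊕ τ) => match a.hom with
          | .id X => Sum.inl X
          | .edge e => Sum.inr e)
      rintro ⟨X, Y, f⟩ ⟨X', Y', f'⟩ h
      change SpanHom s t X Y at f
      change SpanHom s t X' Y' at f'
      cases f <;> cases f' <;> simp only [Sum.inl.injEq, Sum.inr.injEq,
        reduceCtorEq] at h <;> (try subst h) <;> rfl
    refine lt_of_le_of_lt key ?_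
    simp only [Cardinal.mk_sum, Cardinal.lift_id]
    exact Cardinal.add_lt_of_lt hκ (by simpa using Cardinal.add_lt_of_lt hκ hσ hτ) hE

variable {P : Type v} [SmallCategory P]

def spanMap (S : σ → P) (T : τ → P) (lab : ∀ e, S (s e) ⟶ T (t e)) :
    ∀ {X Y : σ ⊕ τ}, SpanHom s t X Y → (Sum.elim S T X ⟶ Sum.elim S T Y)
  | _, _, .id X => 𝟙 (Sum.elim S T X)
  | _, _, .edge e => lab e

def spanFunctor (S : σ → P) (T : τ → P) (lab : ∀ e, S (s e) ⟶ T (t e)) :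
    letI := spanCategory s t
    (σ ⊕ τ) ⥤ P :=
  letI := spanCategory s t
  { obj := Sum.elim S T
    map := spanMap s t S T lab
    map_id := fun _ => rfl
    map_comp := fun {X Y Z} f g => by
      change SpanHom s t X Y at f
      cases f
      · exact (Category.id_comp (spanMap s t S T lab g)).symm
      · rename_i e
        change SpanHom s t _ Z at g
        cases g
        · show spanMap s t S T lab (SpanHom.comp s t (.edge e) (.id _)) =
            spanMap s t S T lab (.edge e) ≫ spanMap s t S T lab (.id _)
          exact (Category.comp_id (spanMap s t S T lab (.edge e))).symm }

lemma exists_span_cocone (κ : Cardinal.{v}) (hκ : ℵ₀ ≤ κ) (hP : IsKappaFiltered κ P)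
    (hσ : #σ < κ) (hτ : #τ < κ) (hE : #E < κ)
    (S : σ → P) (T : τ → P) (lab : ∀ e, S (s e) ⟶ T (t e)) :
    ∃ (q : P) (cs : ∀ a, S a ⟶ q) (ct : ∀ b, T b ⟶ q),
      ∀ e, lab e ≫ ct (t e) = cs (s e) := by
  letI := spanCategory s t
  obtain ⟨c⟩ := hP (σ ⊕ τ) (spanCategory s t) (spanSmall s t κ hκ hσ hτ hE)
    (spanFunctor s t S T lab)
  exact ⟨c.pt, fun a => c.ι.app (Sum.inl a), fun b => c.ι.app (Sum.inr b),
    fun e => c.w (SpanHom.edge e)⟩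

end Span

section Main

variable {P : Type v} [SmallCategory P]

lemma finite_lt_kappa (κ : Cardinal.{v}) (hκ : ℵ₀ ≤ κ) (α : Type v) [Finite α] : #α < κ :=
  lt_of_lt_of_le (Cardinal.lt_aleph0_of_finite α) hκ

lemma isFiltered_of_kappaFiltered (κ : Cardinal.{v}) (hκ : ℵ₀ ≤ κ)
    (hP : IsKappaFiltered κ P) : IsFiltered P := by
  have hfin := finite_lt_kappa κ hκ
  have h0 : Nonempty P := by
    obtain ⟨q, -⟩ := exists_span_cocone (σ := PEmpty.{v + 1}) (τ := PEmpty.{v + 1})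
      (E := PEmpty.{v + 1}) PEmpty.elim PEmpty.elim κ hκ hP (hfin _) (hfin _) (hfin _)
      PEmpty.elim PEmpty.elim (fun e => e.elim)
    exact ⟨q⟩
  have h1 : IsFilteredOrEmpty P := ?_
  · exact { nonempty := h0 }
  constructor
  case cocone_objs =>
    intro X Y
    obtain ⟨q, cs, ct, -⟩ := exists_span_cocone (σ := PUnit.{v + 1}) (τ := PUnit.{v + 1})
      (E := PEmpty.{v + 1}) PEmpty.elim PEmpty.elim κ hκ hP (hfin _) (hfin _) (hfin _)
      (fun _ => X) (fun _ => Y) (fun e => e.elim)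
    exact ⟨q, cs ⟨⟩, ct ⟨⟩, trivial⟩
  case cocone_maps =>
    intro X Y f g
    obtain ⟨q, cs, ct, hc⟩ := exists_span_cocone (σ := PUnit.{v + 1}) (τ := PUnit.{v + 1})
      (E := ULift.{v} Bool) (fun _ => ⟨⟩) (fun _ => ⟨⟩) κ hκ hP (hfin _) (hfin _) (hfin _)
      (fun _ => X) (fun _ => Y) (fun e => bif e.down then f else g)
    exact ⟨q, ct ⟨⟩, (hc ⟨true⟩).trans (hc ⟨false⟩).symm⟩

end Main

open CategoryTheory.Limits.Types CategoryTheory.Limits.Types.FilteredColimit CategoryTheory.Prod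
open CategoryTheory.Category

/-- For a regular cardinal `κ`, `κ`-small limits commute with `κ`-filtered colimits in the
category of sets: for a `κ`-small category `J`, a `κ`-filtered category `P`, and any functor
`F : J × P ⥤ Type`, the canonical map
`colim_{p∈P} lim_{j∈J} F(j,p) → lim_{j∈J} colim_{p∈P} F(j,p)` is a bijection. -/
theorem stmt6 (κ : Cardinal.{v}) (hκ : κ.IsRegular)
    (J : Type v) [SmallCategory J] (hJ : IsKappaSmall κ J)
    (P : Type v) [SmallCategory P] (hP : IsKappaFiltered κ P)
    (F : J × P ⥤ Type v) :
    Function.Bijective (colimitLimitToLimitColimit F) := by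
  have haleph := hκ.aleph0_le
  have hfin := finite_lt_kappa κ haleph
  haveI : IsFiltered P := isFiltered_of_kappaFiltered κ haleph hP
  constructor
  · -- injectivity
    intro x y h
    obtain ⟨kx, x, rfl⟩ := jointly_surjective' x
    obtain ⟨ky, y, rfl⟩ := jointly_surjective' y
    dsimp at x y
    replace h := fun j => congr_arg (limit.π (Functor.curry.obj F ⋙ colim) j) h
    simp only [Functor.comp_obj, colim_obj, ι_colimitLimitToLimitColimit_π_apply,
      FilteredColimit.colimit_eq_iff, Functor.curry_obj_obj_obj, Functor.curry_obj_obj_map] at h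
    let k : J → P := fun j => (h j).choose
    let f : ∀ j, kx ⟶ k j := fun j => (h j).choose_spec.choose
    let g : ∀ j, ky ⟶ k j := fun j => (h j).choose_spec.choose_spec.choose
    have w : ∀ j, F.map ((𝟙 j, f j) : (j, kx) ⟶ (j, k j))
          (limit.π ((Functor.curry.obj (swap P J ⋙ F)).obj kx) j x) =
        F.map ((𝟙 j, g j) : (j, ky) ⟶ (j, k j))
          (limit.π ((Functor.curry.obj (swap P J ⋙ F)).obj ky) j y) :=
      fun j => (h j).choose_spec.choose_spec.choose_spec
    have hprod : #(ULift.{v} Bool × J) < κ := by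
      rw [Cardinal.mk_prod]
      simpa using Cardinal.mul_lt_of_lt haleph (by simpa using hfin (ULift.{v} Bool)) hJ.1
    obtain ⟨q, cs, ct, hc⟩ := exists_span_cocone (σ := ULift.{v} Bool) (τ := J)
      (E := ULift.{v} Bool × J) Prod.fst Prod.snd κ haleph hP (hfin _) hJ.1 hprod
      (fun b => bif b.down then kx else ky) k
      (fun e => match e with
        | (⟨true⟩, j) => f j
        | (⟨false⟩, j) => g j)
    have hcf : ∀ j, f j ≫ ct j = cs ⟨true⟩ := fun j => hc (⟨true⟩, j)
    have hcg : ∀ j, g j ≫ ct j = cs ⟨false⟩ := fun j => hc (⟨false⟩, j)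
    apply colimit_sound' (cs ⟨true⟩) (cs ⟨false⟩)
    ext j
    simp only [Functor.comp_map, Limit.map_π_apply, Functor.curry_obj_map_app, swap_map]
    rw [← hcf j, ← hcg j]
    simp [Limit.map_π_apply, w]
  · -- surjectivity
    intro x
    have z := fun j => jointly_surjective' (limit.π (Functor.curry.obj F ⋙ Limits.colim) j x)
    let k : J → P := fun j => (z j).choose
    let y : ∀ j, F.obj (j, k j) := fun j => (z j).choose_spec.choose
    have e : ∀ j,
        colimit.ι ((Functor.curry.obj F).obj j) (k j) (y j) = limit.π (Functor.curry.obj F ⋙ Limits.colim) j x :=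
      fun j => (z j).choose_spec.choose_spec
    clear_value k y
    clear z
    -- pick a cocone over the discrete family `k`
    obtain ⟨k', -, g, -⟩ := exists_span_cocone (σ := PEmpty.{v + 1}) (τ := J)
      (E := PEmpty.{v + 1}) PEmpty.elim PEmpty.elim κ haleph hP (hfin _) hJ.1 (hfin _)
      PEmpty.elim k (fun e => e.elim)
    have w :
      ∀ {j j' : J} (f : j ⟶ j'),
        colimit.ι ((Functor.curry.obj F).obj j') k' (F.map ((𝟙 j', g j') : (j', k j') ⟶ (j', k')) (y j')) =
          colimit.ι ((Functor.curry.obj F).obj j') k' (F.map ((f, g j) : (j, k j) ⟶ (j', k')) (y j)) := by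
      intro j j' f
      have t : (f, g j) =
          (((f, 𝟙 (k j)) : (j, k j) ⟶ (j', k j)) ≫ (𝟙 j', g j) : (j, k j) ⟶ (j', k')) := by
        simp only [id_comp, comp_id, prod_comp]
      erw [Colimit.w_apply, t, FunctorToTypes.map_comp_apply, Colimit.w_apply, e,
        ← Limit.w_apply.{v, v, v} f, ← e]
      simp only [Functor.comp_map, Types.Colimit.ι_map_apply, Functor.curry_obj_map_app]
      exact ConcreteCategory.congr_hom (ι_colimMap ((Functor.curry.obj F).map f) (k j)) (y j)
    simp_rw [FilteredColimit.colimit_eq_iff] at w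
    let kf : ∀ {j j'} (_ : j ⟶ j'), P := fun f => (w f).choose
    let gf : ∀ {j j'} (f : j ⟶ j'), k' ⟶ kf f := fun f => (w f).choose_spec.choose
    let hf : ∀ {j j'} (f : j ⟶ j'), k' ⟶ kf f := fun f =>
      (w f).choose_spec.choose_spec.choose
    have wf :
      ∀ {j j'} (f : j ⟶ j'),
        F.map ((𝟙 j', g j' ≫ gf f) : (j', k j') ⟶ (j', kf f)) (y j') =
          F.map ((f, g j ≫ hf f) : (j, k j) ⟶ (j', kf f)) (y j) :=
      fun {j j'} f => by
      have q :
        ((Functor.curry.obj F).obj j').map (gf f) (F.map ((𝟙 j', g j') : (j', k j') ⟶ (j', k')) (y j')) =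
          ((Functor.curry.obj F).obj j').map (hf f) (F.map ((f, g j) : (j, k j) ⟶ (j', k')) (y j)) :=
        (w f).choose_spec.choose_spec.choose_spec
      rw [Functor.curry_obj_obj_map, Functor.curry_obj_obj_map] at q
      simp_rw [← FunctorToTypes.map_comp_apply, CategoryStruct.comp] at q
      simpa only [comp_id] using q
    clear_value kf gf hf
    clear w
    -- pick a cocone coequalizing all the `gf f` and `hf f` simultaneously
    have hprod2 : #(ULift.{v} Bool × Arrow J) < κ := by
      rw [Cardinal.mk_prod]
      simpa using Cardinal.mul_lt_of_lt haleph (by simpa using hfin (ULift.{v} Bool)) hJ.2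
    obtain ⟨k'', c0, i', hi⟩ := exists_span_cocone (σ := PUnit.{v + 1}) (τ := Arrow J)
      (E := ULift.{v} Bool × Arrow J) (fun _ => ⟨⟩) Prod.snd κ haleph hP (hfin _) hJ.2 hprod2
      (fun _ => k') (fun φ => kf φ.hom)
      (fun e => match e with
        | (⟨true⟩, φ) => gf φ.hom
        | (⟨false⟩, φ) => hf φ.hom)
    let i : ∀ {j j'} (f : j ⟶ j'), kf f ⟶ k'' := fun {j j'} f => i' (Arrow.mk f)
    have s : ∀ {j₁ j₂ j₃ j₄} (f : j₁ ⟶ j₂) (f' : j₃ ⟶ j₄), gf f ≫ i f = hf f' ≫ i f' := by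
      intro j₁ j₂ j₃ j₄ f f'
      have h1 : gf f ≫ i f = c0 ⟨⟩ := hi (⟨true⟩, Arrow.mk f)
      have h2 : hf f' ≫ i f' = c0 ⟨⟩ := hi (⟨false⟩, Arrow.mk f')
      rw [h1, h2]
    clear_value i
    clear hi i' c0
    fconstructor
    · apply colimit.ι (Functor.curry.obj (swap P J ⋙ F) ⋙ Limits.lim) k'' _
      dsimp
      apply Limit.mk
      swap
      · exact fun j => F.map ((𝟙 j, g j ≫ gf (𝟙 j) ≫ i (𝟙 j)) : (j, k j) ⟶ (j, k'')) (y j)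
      · dsimp
        intro j j' f
        simp only [← FunctorToTypes.map_comp_apply, prod_comp, id_comp, comp_id]
        calc
          F.map ((f, g j ≫ gf (𝟙 j) ≫ i (𝟙 j)) : (j, k j) ⟶ (j', k'')) (y j) =
              F.map ((f, g j ≫ hf f ≫ i f) : (j, k j) ⟶ (j', k'')) (y j) := by
            rw [s (𝟙 j) f]
          _ =
              F.map ((𝟙 j', i f) : (j', kf f) ⟶ (j', k''))
                (F.map ((f, g j ≫ hf f) : (j, k j) ⟶ (j', kf f)) (y j)) := by
            rw [← FunctorToTypes.map_comp_apply, prod_comp, comp_id, assoc]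
          _ =
              F.map ((𝟙 j', i f) : (j', kf f) ⟶ (j', k''))
                (F.map ((𝟙 j', g j' ≫ gf f) : (j', k j') ⟶ (j', kf f)) (y j')) := by
            rw [← wf f]
          _ = F.map ((𝟙 j', g j' ≫ gf f ≫ i f) : (j', k j') ⟶ (j', k'')) (y j') := by
            rw [← FunctorToTypes.map_comp_apply, prod_comp, id_comp, assoc]
          _ = F.map ((𝟙 j', g j' ≫ gf (𝟙 j') ≫ i (𝟙 j')) : (j', k j') ⟶ (j', k'')) (y j') := by
            rw [s f (𝟙 j'), ← s (𝟙 j') (𝟙 j')]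
    · apply limit_ext
      intro j
      simp only [id, ← e, Limits.ι_colimitLimitToLimitColimit_π_apply,
          FilteredColimit.colimit_eq_iff, Bifunctor.map_id_comp, types_comp_apply, Functor.curry_obj_obj_map,
          Functor.comp_obj, colim_obj, Limit.π_mk]
      refine ⟨k'', 𝟙 k'', g j ≫ gf (𝟙 j) ≫ i (𝟙 j), ?_⟩
      rw [Bifunctor.map_id_comp, Bifunctor.map_id_comp, types_comp_apply, types_comp_apply,
        Bifunctor.map_id]
      rfl
end

section
/- Let κ ≤ λ be regular cardinals and A a small category with κ-small colimits. Then every λ-presentable (λ-compact) object of Ind_κ(A) is a retract of an object that is the colimit of a λ-small diagram with values in (the image of) A. -/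
open CategoryTheory CategoryTheory.Limits Cardinal Opposite

universe v u

/-- A preorder is `κ`-directed if every subset of cardinality `< κ` has an upper bound. -/
def KDirected (κ : Cardinal.{v}) (P : Type v) [Preorder P] : Prop :=
  ∀ s : Set P, #s < κ → ∃ x : P, ∀ y ∈ s, y ≤ x

/-- An object `X` is `κ`-compact if `Hom(X, −)` preserves colimits of `κ`-directed posets. -/
def IsKappaCompact (κ : Cardinal.{v}) {C : Type u} [Category.{v} C] (X : C) : Prop :=
  ∀ (P : Type v) (_ : PartialOrder P), KDirected κ P →
    Nonempty (PreservesColimitsOfShape P (coyoneda.obj (op X)))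

/-- A presentation of an object `Y` of `C` as a `κ`-directed colimit of objects of `A`
(along `ι : A ⥤ C`). -/
structure IndPresentation (κ : Cardinal.{v}) {A : Type v} [SmallCategory A]
    {C : Type u} [Category.{v} C] (ι : A ⥤ C) (Y : C) where
  P : Type v
  [po : PartialOrder P]
  directed : KDirected κ P
  diag : P ⥤ A
  cocone : Cocone (diag ⋙ ι)
  isColimit : IsColimit cocone
  iso : cocone.pt ≅ Y

attribute [instance] IndPresentation.po

/-- An exhibition of `X` as a retract of the colimit of a `λ`-small diagram in `A`. -/
structure SmallRetractPresentation (lam : Cardinal.{v}) {A : Type v} [SmallCategory A]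
    {C : Type u} [Category.{v} C] (ι : A ⥤ C) (X : C) where
  J : Type v
  [cat : SmallCategory J]
  small_obj : #J < lam
  small_hom : #(Arrow J) < lam
  diag : J ⥤ A
  cocone : Cocone (diag ⋙ ι)
  isColimit : IsColimit cocone
  s : X ⟶ cocone.pt
  r : cocone.pt ⟶ X
  retract : s ≫ r = 𝟙 X

attribute [instance] SmallRetractPresentation.cat

namespace Aux

lemma arrow_card (J : Type v) [Preorder J] : #(Arrow J) ≤ #J * #J := by
  have inj : Function.Injective (fun a : Arrow J => (a.left, a.right)) := by
    intro a b h
    simp only [Prod.mk.injEq] at h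
    obtain ⟨l, r, f⟩ := a
    obtain ⟨l', r', g⟩ := b
    obtain ⟨h1, h2⟩ := h
    subst h1; subst h2
    cases Subsingleton.elim f g
    rfl
  calc #(Arrow J) ≤ #(J × J) := Cardinal.mk_le_of_injective inj
    _ = #J * #J := by simp [Cardinal.mk_prod]

lemma arrow_card_lt {κ : Cardinal.{v}} (hκ : ℵ₀ ≤ κ) (J : Type v) [Preorder J]
    (h : #J < κ) : #(Arrow J) < κ :=
  (arrow_card J).trans_lt (Cardinal.mul_lt_of_lt hκ h h)

variable {κ : Cardinal.{v}}

lemma kdNonempty {P : Type v} [Preorder P] (h : KDirected κ P) (hκ : ℵ₀ ≤ κ) :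
    Nonempty P := by
  obtain ⟨x, -⟩ := h ∅ (by simpa using aleph0_pos.trans_le hκ)
  exact ⟨x⟩

lemma kdIsDirected {P : Type v} [Preorder P] (h : KDirected κ P) (hκ : ℵ₀ ≤ κ) :
    IsDirected P (· ≤ ·) := by
  constructor
  intro a b
  obtain ⟨x, hx⟩ := h {a, b} (lt_of_lt_of_le (Set.Finite.lt_aleph0 (by simp)) hκ)
  exact ⟨x, hx a (by simp), hx b (by simp)⟩

lemma kdIsFiltered {P : Type v} [Preorder P] (h : KDirected κ P) (hκ : ℵ₀ ≤ κ) :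
    IsFiltered P := by
  have := kdNonempty h hκ
  have := kdIsDirected h hκ
  infer_instance

section Stage

variable {C : Type u} [Category.{v} C] {P : Type v} [Preorder P]
  {F : P ⥤ C} {c : Cocone F} {W : C}

lemma factor_through_stage (hc : IsColimit c)
    [PreservesColimitsOfShape P (coyoneda.obj (op W))]
    (f : W ⟶ c.pt) : ∃ (p : P) (g : W ⟶ F.obj p), g ≫ c.ι.app p = f := by
  obtain ⟨p, g, hg⟩ := Types.jointly_surjective _
    (isColimitOfPreserves (coyoneda.obj (op W)) hc) f
  exact ⟨p, g, hg⟩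

lemma stage_eq (hc : IsColimit c) [IsFiltered P]
    [PreservesColimitsOfShape P (coyoneda.obj (op W))]
    {p : P} {g g' : W ⟶ F.obj p} (h : g ≫ c.ι.app p = g' ≫ c.ι.app p) :
    ∃ (q : P) (hpq : p ≤ q), g ≫ F.map (homOfLE hpq) = g' ≫ F.map (homOfLE hpq) := by
  have h2 := (Types.FilteredColimit.isColimit_eq_iff (F ⋙ coyoneda.obj (op W))
    (isColimitOfPreserves (coyoneda.obj (op W)) hc) (i := p) (j := p)
    (xi := g) (xj := g')).1 h
  obtain ⟨k, f1, f2, hk⟩ := h2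
  refine ⟨k, leOfHom f1, ?_⟩
  have h3 : f2 = f1 := Subsingleton.elim _ _
  rw [h3] at hk
  have h4 : homOfLE (leOfHom f1) = f1 := Subsingleton.elim _ _
  rw [h4]
  exact hk

lemma push_stage {p q r : P} (hpq : p ≤ q) (hqr : q ≤ r) {g g' : W ⟶ F.obj p}
    (h : g ≫ F.map (homOfLE hpq) = g' ≫ F.map (homOfLE hpq)) :
    g ≫ F.map (homOfLE (hpq.trans hqr)) = g' ≫ F.map (homOfLE (hpq.trans hqr)) := by
  have : homOfLE (hpq.trans hqr) = homOfLE hpq ≫ homOfLE hqr := Subsingleton.elim _ _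
  rw [this, F.map_comp, ← Category.assoc, ← Category.assoc, h]

lemma comp_app_of_le (p q : P) (hpq : p ≤ q) {g : W ⟶ F.obj p} :
    (g ≫ F.map (homOfLE hpq)) ≫ c.ι.app q = g ≫ c.ι.app p := by
  rw [Category.assoc, c.w (homOfLE hpq)]

end Stage

section L1

variable {κ : Cardinal.{v}}
variable {A : Type v} [SmallCategory A] {C : Type u} [Category.{v} C] (ι : A ⥤ C)
variable [ι.Full] [ι.Faithful]

/-- `ι` preserves `κ`-small colimits. -/
noncomputable def mapIsColimit (hκ : κ.IsRegular)
    (hcpt : ∀ a : A, IsKappaCompact κ (ι.obj a))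
    (hgen : ∀ Y : C, Nonempty (IndPresentation κ ι Y))
    {K : Type v} [SmallCategory K] (hK : #K < κ) (hKa : #(Arrow K) < κ)
    {b : K ⥤ A} {c : Cocone b} (hc : IsColimit c) :
    IsColimit (ι.mapCocone c) := by
  apply IsColimit.ofExistsUnique
  intro z
  obtain ⟨pr⟩ := hgen z.pt
  haveI hfil : IsFiltered pr.P := kdIsFiltered pr.directed hκ.aleph0_le
  -- uniqueness
  have key : ∀ m m' : ι.obj c.pt ⟶ z.pt,
      (∀ k, ι.map (c.ι.app k) ≫ m = z.ι.app k) →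
      (∀ k, ι.map (c.ι.app k) ≫ m' = z.ι.app k) → m = m' := by
    intro m m' hm hm'
    haveI := (hcpt c.pt pr.P inferInstance pr.directed).some
    obtain ⟨pm, gm, hgm⟩ := factor_through_stage pr.isColimit (m ≫ pr.iso.inv)
    obtain ⟨pm', gm', hgm'⟩ := factor_through_stage pr.isColimit (m' ≫ pr.iso.inv)
    obtain ⟨p₂, hp₂⟩ := pr.directed {pm, pm'}
      (lt_of_lt_of_le (Set.Finite.lt_aleph0 (by simp)) hκ.aleph0_le)
    obtain ⟨Gm, hGm⟩ : ∃ u : ι.obj c.pt ⟶ (pr.diag ⋙ ι).obj p₂,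
        u ≫ pr.cocone.ι.app p₂ = m ≫ pr.iso.inv :=
      ⟨gm ≫ (pr.diag ⋙ ι).map (homOfLE (hp₂ pm (by simp))),
        by rw [comp_app_of_le]; exact hgm⟩
    obtain ⟨Gm', hGm'⟩ : ∃ u : ι.obj c.pt ⟶ (pr.diag ⋙ ι).obj p₂,
        u ≫ pr.cocone.ι.app p₂ = m' ≫ pr.iso.inv :=
      ⟨gm' ≫ (pr.diag ⋙ ι).map (homOfLE (hp₂ pm' (by simp))),
        by rw [comp_app_of_le]; exact hgm'⟩
    have step : ∀ k : K, ∃ (q : pr.P) (h2q : p₂ ≤ q),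
        (ι.map (c.ι.app k) ≫ Gm) ≫ (pr.diag ⋙ ι).map (homOfLE h2q) =
        (ι.map (c.ι.app k) ≫ Gm') ≫ (pr.diag ⋙ ι).map (homOfLE h2q) := by
      intro k
      haveI := (hcpt (b.obj k) pr.P inferInstance pr.directed).some
      apply stage_eq pr.isColimit
      rw [Category.assoc, Category.assoc, hGm, hGm', ← Category.assoc, ← Category.assoc,
        hm, hm']
    choose q hq heq using step
    obtain ⟨p₃, hp₃⟩ := pr.directed (insert p₂ (Set.range q))
      (lt_of_le_of_lt Cardinal.mk_insert_le
        (Cardinal.add_lt_of_lt hκ.aleph0_le (Cardinal.mk_range_le.trans_lt hK)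
          (one_lt_aleph0.trans_le hκ.aleph0_le)))
    have h23 : p₂ ≤ p₃ := hp₃ p₂ (by simp)
    obtain ⟨Hm, Hm', hHm, hHm', hkey⟩ :
        ∃ (u u' : ι.obj c.pt ⟶ (pr.diag ⋙ ι).obj p₃),
          u ≫ pr.cocone.ι.app p₃ = m ≫ pr.iso.inv ∧
          u' ≫ pr.cocone.ι.app p₃ = m' ≫ pr.iso.inv ∧
          ∀ k, ι.map (c.ι.app k) ≫ u = ι.map (c.ι.app k) ≫ u' := by
      refine ⟨Gm ≫ (pr.diag ⋙ ι).map (homOfLE h23),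
        Gm' ≫ (pr.diag ⋙ ι).map (homOfLE h23),
        by rw [comp_app_of_le]; exact hGm, by rw [comp_app_of_le]; exact hGm', ?_⟩
      intro k
      have h := push_stage (hq k) (hp₃ (q k) (Set.mem_insert_of_mem _ ⟨k, rfl⟩)) (heq k)
      rw [← Category.assoc, ← Category.assoc]
      exact h
    have hHH : Hm = Hm' := by
      have h5 : ι.preimage Hm = ι.preimage Hm' := by
        apply hc.hom_ext
        intro k
        apply ι.map_injective
        rw [ι.map_comp, ι.map_comp, ι.map_preimage, ι.map_preimage]
        exact hkey k
      rw [← ι.map_preimage Hm, ← ι.map_preimage Hm', h5]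
    have h6 : m ≫ pr.iso.inv = m' ≫ pr.iso.inv := by rw [← hHm, ← hHm', hHH]
    simpa using h6
  -- existence
  have step1 : ∀ k : K, ∃ (p : pr.P) (g : ι.obj (b.obj k) ⟶ (pr.diag ⋙ ι).obj p),
      g ≫ pr.cocone.ι.app p = z.ι.app k ≫ pr.iso.inv := by
    intro k
    haveI := (hcpt (b.obj k) pr.P inferInstance pr.directed).some
    exact factor_through_stage pr.isColimit _
  choose p g hg using step1
  obtain ⟨p₀, hp₀⟩ := pr.directed (Set.range p) (Cardinal.mk_range_le.trans_lt hK)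
  obtain ⟨g1, hg1⟩ : ∃ g1 : ∀ k : K, ι.obj (b.obj k) ⟶ (pr.diag ⋙ ι).obj p₀,
      ∀ k, g1 k ≫ pr.cocone.ι.app p₀ = z.ι.app k ≫ pr.iso.inv :=
    ⟨fun k => g k ≫ (pr.diag ⋙ ι).map (homOfLE (hp₀ (p k) ⟨k, rfl⟩)),
      fun k => by rw [comp_app_of_le]; exact hg k⟩
  have step2 : ∀ φ : Arrow K, ∃ (q : pr.P) (h0q : p₀ ≤ q),
      (ι.map (b.map φ.hom) ≫ g1 φ.right) ≫ (pr.diag ⋙ ι).map (homOfLE h0q) =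
      (g1 φ.left) ≫ (pr.diag ⋙ ι).map (homOfLE h0q) := by
    intro φ
    obtain ⟨k, k', φh⟩ := φ
    simp only [Functor.id_obj] at φh ⊢
    haveI := (hcpt (b.obj k) pr.P inferInstance pr.directed).some
    apply stage_eq pr.isColimit
    rw [Category.assoc, hg1, hg1, ← Category.assoc]
    have hw := z.w φh
    dsimp only [Functor.comp_map] at hw
    rw [hw]
  choose q hq heq using step2
  obtain ⟨p₁, hp₁⟩ := pr.directed (insert p₀ (Set.range q))
    (lt_of_le_of_lt Cardinal.mk_insert_le
      (Cardinal.add_lt_of_lt hκ.aleph0_le (Cardinal.mk_range_le.trans_lt hKa)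
        (one_lt_aleph0.trans_le hκ.aleph0_le)))
  have h01 : p₀ ≤ p₁ := hp₁ p₀ (by simp)
  obtain ⟨g2, hg2, compat⟩ : ∃ g2 : ∀ k : K, ι.obj (b.obj k) ⟶ ι.obj (pr.diag.obj p₁),
      (∀ k, g2 k ≫ pr.cocone.ι.app p₁ = z.ι.app k ≫ pr.iso.inv) ∧
      (∀ {k k' : K} (φh : k ⟶ k'), ι.map (b.map φh) ≫ g2 k' = g2 k) := by
    refine ⟨fun k => g1 k ≫ (pr.diag ⋙ ι).map (homOfLE h01),
      fun k => by rw [comp_app_of_le]; exact hg1 k, ?_⟩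
    intro k k' φh
    have h := push_stage (hq (Arrow.mk φh))
      (hp₁ (q (Arrow.mk φh)) (Set.mem_insert_of_mem _ ⟨Arrow.mk φh, rfl⟩))
      (heq (Arrow.mk φh))
    rw [← Category.assoc]
    exact h
  let v : Cocone b := ⟨pr.diag.obj p₁,
    ⟨fun k => ι.preimage (g2 k), by
      intro k k' φh
      dsimp
      rw [Category.comp_id]
      apply ι.map_injective
      rw [ι.map_comp, ι.map_preimage, ι.map_preimage]
      exact compat φh⟩⟩
  have e1 : ∀ k, ι.map (c.ι.app k) ≫ ι.map (hc.desc v) = g2 k := by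
    intro k
    rw [← ι.map_comp, hc.fac v k]
    exact ι.map_preimage _
  refine ⟨ι.map (hc.desc v) ≫ pr.cocone.ι.app p₁ ≫ pr.iso.hom, ?_, ?_⟩
  · intro k
    show ι.map (c.ι.app k) ≫ ι.map (hc.desc v) ≫ pr.cocone.ι.app p₁ ≫ pr.iso.hom = z.ι.app k
    calc ι.map (c.ι.app k) ≫ ι.map (hc.desc v) ≫ pr.cocone.ι.app p₁ ≫ pr.iso.hom
        = (ι.map (c.ι.app k) ≫ ι.map (hc.desc v)) ≫ pr.cocone.ι.app p₁ ≫ pr.iso.hom := by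
          rw [Category.assoc]
      _ = g2 k ≫ pr.cocone.ι.app p₁ ≫ pr.iso.hom := by rw [e1]
      _ = (g2 k ≫ pr.cocone.ι.app p₁) ≫ pr.iso.hom := by rw [Category.assoc]
      _ = (z.ι.app k ≫ pr.iso.inv) ≫ pr.iso.hom := by rw [hg2]
      _ = z.ι.app k := by simp
  · intro m hm
    apply key
    · exact fun k => hm k
    · intro k
      show ι.map (c.ι.app k) ≫ ι.map (hc.desc v) ≫ pr.cocone.ι.app p₁ ≫ pr.iso.hom = z.ι.app k
      calc ι.map (c.ι.app k) ≫ ι.map (hc.desc v) ≫ pr.cocone.ι.app p₁ ≫ pr.iso.hom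
          = (ι.map (c.ι.app k) ≫ ι.map (hc.desc v)) ≫ pr.cocone.ι.app p₁ ≫ pr.iso.hom := by
            rw [Category.assoc]
        _ = g2 k ≫ pr.cocone.ι.app p₁ ≫ pr.iso.hom := by rw [e1]
        _ = (g2 k ≫ pr.cocone.ι.app p₁) ≫ pr.iso.hom := by rw [Category.assoc]
        _ = (z.ι.app k ≫ pr.iso.inv) ≫ pr.iso.hom := by rw [hg2]
        _ = z.ι.app k := by simp

end L1

section MainConstruction
set_option linter.unusedSectionVars false

variable {κ lam : Cardinal.{v}}
variable {A : Type v} [SmallCategory A] {C : Type u} [Category.{v} C] {ι : A ⥤ C}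
variable [ι.Full] [ι.Faithful]

structure Setup (κ lam : Cardinal.{v}) {A : Type v} [SmallCategory A] {C : Type u}
    [Category.{v} C] (ι : A ⥤ C) where
  hκ : κ.IsRegular
  hlam : lam.IsRegular
  hA : ∀ (J : Type v) (_ : SmallCategory J), #J < κ → #(Arrow J) < κ → HasColimitsOfShape J A
  hcolim : ∀ (P : Type v) (_ : PartialOrder P), KDirected κ P → HasColimitsOfShape P C
  hcpt : ∀ a : A, IsKappaCompact κ (ι.obj a)
  hgen : ∀ Y : C, Nonempty (IndPresentation κ ι Y)
  X : C
  pres : IndPresentation κ ι X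

namespace Setup

variable (S : Setup κ lam ι)

abbrev Pt := S.pres.P

abbrev d : S.Pt ⥤ A := S.pres.diag

/-- κ-small subsets of the presenting poset. -/
abbrev Sub := {T : Set S.Pt // #T < κ}

def inclT (T : Set S.Pt) : ↥T ⥤ S.Pt := Monotone.functor (f := Subtype.val) (fun _ _ h => h)

def dT (T : Set S.Pt) : ↥T ⥤ A := S.inclT T ⋙ S.d

lemma dT_map {T : Set S.Pt} {t t' : ↥T} (f : t ⟶ t') :
    (S.dT T).map f = S.d.map (homOfLE (leOfHom f : t.1 ≤ t'.1)) := rfl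

lemma hasColimA (T : S.Sub) : HasColimitsOfShape ↥T.1 A :=
  S.hA _ _ T.2 (arrow_card_lt S.hκ.aleph0_le _ T.2)

noncomputable def aT (T : S.Sub) : A :=
  letI := S.hasColimA T; colimit (S.dT T.1)

noncomputable def aι (T : S.Sub) {p : S.Pt} (hp : p ∈ T.1) : S.d.obj p ⟶ S.aT T :=
  letI := S.hasColimA T; colimit.ι (S.dT T.1) ⟨p, hp⟩

lemma aι_w (T : S.Sub) {p q : S.Pt} (hp : p ∈ T.1) (hq : q ∈ T.1) (hpq : p ≤ q) :
    S.d.map (homOfLE hpq) ≫ S.aι T hq = S.aι T hp := by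
  letI := S.hasColimA T
  exact colimit.w (S.dT T.1) (homOfLE (show (⟨p, hp⟩ : ↥T.1) ≤ ⟨q, hq⟩ from hpq))

noncomputable def aMap {T T' : S.Sub} (h : T ≤ T') : S.aT T ⟶ S.aT T' := by
  letI := S.hasColimA T
  exact colimit.desc (S.dT T.1) ⟨S.aT T',
    ⟨fun t => S.aι T' (h t.2), by
      intro t t' f
      dsimp
      erw [Category.comp_id]
      exact S.aι_w T' (h t.2) (h t'.2) (leOfHom f)⟩⟩

lemma aι_aMap {T T' : S.Sub} (h : T ≤ T') {p : S.Pt} (hp : p ∈ T.1) :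
    S.aι T hp ≫ S.aMap h = S.aι T' (h hp) := by
  letI := S.hasColimA T
  exact colimit.ι_desc _ (⟨p, hp⟩ : ↥T.1)

lemma a_hom_ext (T : S.Sub) {Z : A} {f g : S.aT T ⟶ Z}
    (h : ∀ (p : S.Pt) (hp : p ∈ T.1), S.aι T hp ≫ f = S.aι T hp ≫ g) : f = g := by
  letI := S.hasColimA T
  exact colimit.hom_ext (fun j => h j.1 j.2)

lemma aMap_eq_id {T : S.Sub} (h : T ≤ T) : S.aMap h = 𝟙 (S.aT T) := by
  apply S.a_hom_ext
  intro p hp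
  rw [S.aι_aMap, Category.comp_id]

lemma aMap_comp {T T' T'' : S.Sub} (h1 : T ≤ T') (h2 : T' ≤ T'') (h3 : T ≤ T'') :
    S.aMap h3 = S.aMap h1 ≫ S.aMap h2 := by
  apply S.a_hom_ext
  intro p hp
  rw [S.aι_aMap, ← Category.assoc, S.aι_aMap, S.aι_aMap]

/-- `ι (aT T)` is the colimit of `dT T ⋙ ι` in `C`. -/
noncomputable def aTC (T : S.Sub) :
    IsColimit (ι.mapCocone (letI := S.hasColimA T; colimit.cocone (S.dT T.1))) :=
  letI := S.hasColimA T
  mapIsColimit ι S.hκ S.hcpt S.hgen T.2 (arrow_card_lt S.hκ.aleph0_le _ T.2)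
    (colimit.isColimit _)

lemma aC_hom_ext (T : S.Sub) {Z : C} {f g : ι.obj (S.aT T) ⟶ Z}
    (h : ∀ (p : S.Pt) (hp : p ∈ T.1), ι.map (S.aι T hp) ≫ f = ι.map (S.aι T hp) ≫ g) :
    f = g :=
  (S.aTC T).hom_ext (fun j => h j.1 j.2)

noncomputable def aDesc (T : S.Sub) (z : Cocone (S.dT T.1 ⋙ ι)) :
    ι.obj (S.aT T) ⟶ z.pt := (S.aTC T).desc z

lemma aDesc_fac (T : S.Sub) (z : Cocone (S.dT T.1 ⋙ ι)) {p : S.Pt} (hp : p ∈ T.1) :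
    ι.map (S.aι T hp) ≫ S.aDesc T z = z.ι.app ⟨p, hp⟩ :=
  (S.aTC T).fac z ⟨p, hp⟩

noncomputable def rho (T : S.Sub) : ι.obj (S.aT T) ⟶ S.pres.cocone.pt :=
  S.aDesc T ⟨S.pres.cocone.pt,
    ⟨fun t => S.pres.cocone.ι.app t.1, by
      intro t t' f
      dsimp
      erw [Category.comp_id]
      exact S.pres.cocone.w (homOfLE (leOfHom f : t.1 ≤ t'.1))⟩⟩

lemma rho_fac (T : S.Sub) {p : S.Pt} (hp : p ∈ T.1) :
    ι.map (S.aι T hp) ≫ S.rho T = S.pres.cocone.ι.app p :=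
  S.aDesc_fac T _ hp

/-- κ-small subsets of `Sset`. -/
abbrev DS (Sset : Set S.Pt) := {T : S.Sub // T.1 ⊆ Sset}

lemma DS_directed (Sset : Set S.Pt) : KDirected κ (S.DS Sset) := by
  intro u hu
  refine ⟨⟨⟨⋃ (y : u), y.1.1.1, ?_⟩, ?_⟩, ?_⟩
  · exact lt_of_le_of_lt (Cardinal.mk_iUnion_le _)
      (Cardinal.mul_lt_of_lt S.hκ.aleph0_le hu
        (Cardinal.iSup_lt_of_isRegular S.hκ hu (fun y => y.1.1.2)))
  · exact Set.iUnion_subset (fun y => y.1.2)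
  · intro y hy
    exact Set.subset_iUnion (fun (y : u) => y.1.1.1) ⟨y, hy⟩

lemma hasColimDS (Sset : Set S.Pt) : HasColimitsOfShape (S.DS Sset) C :=
  S.hcolim _ inferInstance (S.DS_directed Sset)

noncomputable def GH (Sset : Set S.Pt) : S.DS Sset ⥤ C where
  obj T := ι.obj (S.aT T.1)
  map {T T'} f := ι.map (S.aMap (leOfHom f : T ≤ T'))
  map_id T := by rw [S.aMap_eq_id, ι.map_id]
  map_comp {T T' T''} f g := by
    rw [S.aMap_comp (leOfHom f) (leOfHom g) ((leOfHom f).trans (leOfHom g)), ι.map_comp]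

noncomputable def G (Sset : Set S.Pt) : C :=
  letI := S.hasColimDS Sset; colimit (S.GH Sset)

noncomputable def Gι (Sset : Set S.Pt) (T : S.DS Sset) : ι.obj (S.aT T.1) ⟶ S.G Sset :=
  letI := S.hasColimDS Sset; colimit.ι (S.GH Sset) T

lemma G_hom_ext {Sset : Set S.Pt} {Z : C} {f g : S.G Sset ⟶ Z}
    (h : ∀ T : S.DS Sset, S.Gι Sset T ≫ f = S.Gι Sset T ≫ g) : f = g := by
  letI := S.hasColimDS Sset
  exact colimit.hom_ext h

lemma Gι_w {Sset : Set S.Pt} (T T' : S.DS Sset) (h : T ≤ T') :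
    ι.map (S.aMap (h : T.1 ≤ T'.1)) ≫ S.Gι Sset T' = S.Gι Sset T := by
  letI := S.hasColimDS Sset
  exact colimit.w (S.GH Sset) (homOfLE h)

noncomputable def GDesc (Sset : Set S.Pt) {Z : C}
    (legs : ∀ T : S.DS Sset, ι.obj (S.aT T.1) ⟶ Z)
    (nat : ∀ (T T' : S.DS Sset) (h : T ≤ T'),
      ι.map (S.aMap (h : T.1 ≤ T'.1)) ≫ legs T' = legs T) : S.G Sset ⟶ Z := by
  letI := S.hasColimDS Sset
  exact colimit.desc (S.GH Sset) ⟨Z, ⟨legs, by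
    intro T T' f
    dsimp
    erw [Category.comp_id]
    exact nat T T' (leOfHom f)⟩⟩

lemma Gι_GDesc {Sset : Set S.Pt} {Z : C} (legs : ∀ T : S.DS Sset, ι.obj (S.aT T.1) ⟶ Z)
    (nat : ∀ (T T' : S.DS Sset) (h : T ≤ T'),
      ι.map (S.aMap (h : T.1 ≤ T'.1)) ≫ legs T' = legs T) (T : S.DS Sset) :
    S.Gι Sset T ≫ S.GDesc Sset legs nat = legs T := by
  letI := S.hasColimDS Sset
  exact colimit.ι_desc _ T

noncomputable def GMap {S1 S2 : Set S.Pt} (h : S1 ⊆ S2) : S.G S1 ⟶ S.G S2 :=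
  S.GDesc S1 (fun T => S.Gι S2 ⟨T.1, T.2.trans h⟩)
    (fun T T' hTT' => S.Gι_w (Sset := S2) ⟨T.1, T.2.trans h⟩ ⟨T'.1, T'.2.trans h⟩ hTT')

lemma Gι_GMap {S1 S2 : Set S.Pt} (h : S1 ⊆ S2) (T : S.DS S1) :
    S.Gι S1 T ≫ S.GMap h = S.Gι S2 ⟨T.1, T.2.trans h⟩ :=
  S.Gι_GDesc _ _ T

lemma singleton_small (p : S.Pt) : #({p} : Set S.Pt) < κ := by
  rw [Cardinal.mk_singleton]
  exact one_lt_aleph0.trans_le S.hκ.aleph0_le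

noncomputable def singletonSub (p : S.Pt) : S.Sub := ⟨{p}, S.singleton_small p⟩

noncomputable def singletonDS {Sset : Set S.Pt} {p : S.Pt} (hp : p ∈ Sset) : S.DS Sset :=
  ⟨S.singletonSub p, Set.singleton_subset_iff.2 hp⟩

noncomputable def csLeg (Sset : Set S.Pt) {p : S.Pt} (hp : p ∈ Sset) :
    ι.obj (S.d.obj p) ⟶ S.G Sset :=
  ι.map (S.aι (S.singletonSub p) rfl) ≫ S.Gι Sset (S.singletonDS hp)

lemma csLeg_eq {Sset : Set S.Pt} (T : S.DS Sset) {p : S.Pt} (hp : p ∈ T.1.1) :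
    ι.map (S.aι T.1 hp) ≫ S.Gι Sset T = S.csLeg Sset (T.2 hp) := by
  have h0 : S.singletonDS (T.2 hp) ≤ T := Set.singleton_subset_iff.2 hp
  show _ = ι.map (S.aι (S.singletonSub p) rfl) ≫ S.Gι Sset (S.singletonDS (T.2 hp))
  erw [← S.Gι_w (S.singletonDS (T.2 hp)) T h0, ← Category.assoc, ← ι.map_comp, S.aι_aMap]

lemma csLeg_nat (Sset : Set S.Pt) {p p' : S.Pt} (hp : p ∈ Sset) (hp' : p' ∈ Sset)
    (hpp' : p ≤ p') :
    ι.map (S.d.map (homOfLE hpp')) ≫ S.csLeg Sset hp' = S.csLeg Sset hp := by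
  have hcard : #({p, p'} : Set S.Pt) < κ :=
    lt_of_lt_of_le (Set.Finite.lt_aleph0 (by simp)) S.hκ.aleph0_le
  set T : S.DS Sset := ⟨⟨{p, p'}, hcard⟩, by
    intro x hx
    rcases hx with h | h
    · rw [h]; exact hp
    · rw [h]; exact hp'⟩ with hT
  have m1 : p ∈ T.1.1 := by simp [hT]
  have m2 : p' ∈ T.1.1 := by simp [hT]
  rw [← S.csLeg_eq T m1, ← S.csLeg_eq T m2, ← Category.assoc, ← ι.map_comp, S.aι_w]

noncomputable def cs (Sset : Set S.Pt) : Cocone (S.dT Sset ⋙ ι) where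
  pt := S.G Sset
  ι := { app := fun t => S.csLeg Sset t.2
         naturality := by
           intro t t' f
           dsimp
           erw [Category.comp_id, S.dT_map]
           exact S.csLeg_nat Sset t.2 t'.2 (leOfHom f) }

lemma cs_app (Sset : Set S.Pt) (t : ↥Sset) : (S.cs Sset).ι.app t = S.csLeg Sset t.2 := rfl

noncomputable def restrictCocone {Sset : Set S.Pt} (T : S.DS Sset)
    (z : Cocone (S.dT Sset ⋙ ι)) : Cocone (S.dT T.1.1 ⋙ ι) where
  pt := z.pt
  ι := { app := fun t => z.ι.app ⟨t.1, T.2 t.2⟩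
         naturality := by
           intro t t' f
           dsimp
           erw [Category.comp_id]
           exact z.w (homOfLE (leOfHom f : t.1 ≤ t'.1) :
             (⟨t.1, T.2 t.2⟩ : ↥Sset) ⟶ ⟨t'.1, T.2 t'.2⟩) }

noncomputable def csDesc (Sset : Set S.Pt) (z : Cocone (S.dT Sset ⋙ ι)) :
    S.G Sset ⟶ z.pt :=
  S.GDesc Sset (fun T => S.aDesc T.1 (S.restrictCocone T z)) (by
    intro T T' h
    apply S.aC_hom_ext T.1
    intro pp hp
    erw [← Category.assoc, ← ι.map_comp, S.aι_aMap, S.aDesc_fac, S.aDesc_fac]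
    rfl)

noncomputable def csIsColimit (Sset : Set S.Pt) : IsColimit (S.cs Sset) := by
  apply IsColimit.ofExistsUnique
  intro z
  refine ⟨S.csDesc Sset z, ?_, ?_⟩
  · intro t
    rw [S.cs_app]
    show (ι.map (S.aι (S.singletonDS t.2).1 rfl) ≫ S.Gι Sset (S.singletonDS t.2)) ≫ _ = _
    erw [Category.assoc, csDesc, S.Gι_GDesc, S.aDesc_fac]
    rfl
  · intro m hm
    apply S.G_hom_ext
    intro T
    erw [csDesc, S.Gι_GDesc]
    apply S.aC_hom_ext T.1
    intro pp hp
    erw [S.aDesc_fac, ← Category.assoc, S.csLeg_eq T hp]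
    exact hm ⟨pp, T.2 hp⟩

noncomputable def rS (Sset : Set S.Pt) : S.G Sset ⟶ S.pres.cocone.pt :=
  S.GDesc Sset (fun T => S.rho T.1) (by
    intro T T' h
    apply S.aC_hom_ext T.1
    intro pp hp
    rw [← Category.assoc, ← ι.map_comp, S.aι_aMap, S.rho_fac, S.rho_fac])

lemma Gι_rS {Sset : Set S.Pt} (T : S.DS Sset) : S.Gι Sset T ≫ S.rS Sset = S.rho T.1 :=
  S.Gι_GDesc _ _ T

lemma GMap_rS {S1 S2 : Set S.Pt} (h : S1 ⊆ S2) : S.GMap h ≫ S.rS S2 = S.rS S1 := by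
  apply S.G_hom_ext
  intro T
  rw [← Category.assoc, S.Gι_GMap, S.Gι_rS, S.Gι_rS]

lemma csLeg_rS {Sset : Set S.Pt} {p : S.Pt} (hp : p ∈ Sset) :
    S.csLeg Sset hp ≫ S.rS Sset = S.pres.cocone.ι.app p := by
  show (ι.map (S.aι (S.singletonDS hp).1 rfl) ≫ S.Gι Sset (S.singletonDS hp)) ≫ _ = _
  erw [Category.assoc, S.Gι_rS, S.rho_fac]

lemma csLeg_GMap {S1 S2 : Set S.Pt} (h : S1 ⊆ S2) {p : S.Pt} (hp : p ∈ S1) :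
    S.csLeg S1 hp ≫ S.GMap h = S.csLeg S2 (h hp) := by
  show (ι.map (S.aι (S.singletonSub p) rfl) ≫ S.Gι S1 (S.singletonDS hp)) ≫ _ = _
  erw [Category.assoc, S.Gι_GMap]
  exact S.csLeg_eq (⟨S.singletonSub p, (Set.singleton_subset_iff.2 hp).trans h⟩ : S.DS S2) rfl

lemma GMap_eq_id {S1 : Set S.Pt} (h : S1 ⊆ S1) : S.GMap h = 𝟙 (S.G S1) := by
  apply S.G_hom_ext
  intro T
  rw [S.Gι_GMap, Category.comp_id]

lemma GMap_comp' {S1 S2 S3 : Set S.Pt} (h1 : S1 ⊆ S2) (h2 : S2 ⊆ S3) (h3 : S1 ⊆ S3) :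
    S.GMap h3 = S.GMap h1 ≫ S.GMap h2 := by
  apply S.G_hom_ext
  intro T
  rw [S.Gι_GMap, ← Category.assoc, S.Gι_GMap, S.Gι_GMap]

/-- `lam`-small subsets of the presenting poset. -/
abbrev Q := {Sset : Set S.Pt // #Sset < lam}

lemma Q_directed : KDirected lam S.Q := by
  intro u hu
  refine ⟨⟨⋃ (y : u), y.1.1, ?_⟩, ?_⟩
  · exact lt_of_le_of_lt (Cardinal.mk_iUnion_le _)
      (Cardinal.mul_lt_of_lt S.hlam.aleph0_le hu
        (Cardinal.iSup_lt_of_isRegular S.hlam hu (fun y => y.1.2)))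
  · intro y hy
    exact Set.subset_iUnion (fun (y : u) => y.1.1) ⟨y, hy⟩

noncomputable def GQ : S.Q ⥤ C where
  obj Ss := S.G Ss.1
  map {a b} f := S.GMap (leOfHom f : a.1 ⊆ b.1)
  map_id a := by rw [S.GMap_eq_id]
  map_comp {a b c} f g := by
    rw [S.GMap_comp' (leOfHom f) (leOfHom g) ((leOfHom f).trans (leOfHom g))]

lemma GQ_map {a b : S.Q} (f : a ⟶ b) : S.GQ.map f = S.GMap (leOfHom f : a.1 ⊆ b.1) := rfl

noncomputable def cQ : Cocone S.GQ where
  pt := S.pres.cocone.pt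
  ι := { app := fun Ss => S.rS Ss.1
         naturality := by
           intro a b f
           dsimp
           erw [Category.comp_id]
           exact S.GMap_rS (leOfHom f) }

lemma singleton_small_lam (p : S.Pt) : #({p} : Set S.Pt) < lam := by
  rw [Cardinal.mk_singleton]
  exact one_lt_aleph0.trans_le S.hlam.aleph0_le

noncomputable def singletonQ (p : S.Pt) : S.Q := ⟨{p}, S.singleton_small_lam p⟩

noncomputable def cQIsColimit : IsColimit S.cQ := by
  apply IsColimit.ofExistsUnique
  intro ψ
  have legQ_eq : ∀ (Ss : S.Q) {p : S.Pt} (hp : p ∈ Ss.1),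
      S.csLeg Ss.1 hp ≫ ψ.ι.app Ss = S.csLeg {p} rfl ≫ ψ.ι.app (S.singletonQ p) := by
    intro Ss p hp
    have h0 : ({p} : Set S.Pt) ⊆ Ss.1 := Set.singleton_subset_iff.2 hp
    have hw := ψ.w (homOfLE (show S.singletonQ p ≤ Ss from h0))
    erw [← hw, S.GQ_map, ← Category.assoc, S.csLeg_GMap]
    rfl
  have pair_small : ∀ p p' : S.Pt, #({p, p'} : Set S.Pt) < lam := fun p p' =>
    lt_of_lt_of_le (Set.Finite.lt_aleph0 (by simp)) S.hlam.aleph0_le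
  set zc : Cocone (S.pres.diag ⋙ ι) :=
    { pt := ψ.pt
      ι := { app := fun p => S.csLeg {p} rfl ≫ ψ.ι.app (S.singletonQ p)
             naturality := by
               intro p p' f
               dsimp
               rw [Category.comp_id]
               have hf : f = homOfLE (leOfHom f) := Subsingleton.elim _ _
               rw [hf]
               set pairQ : S.Q := ⟨{p, p'}, pair_small p p'⟩ with hpair
               have m1 : p ∈ pairQ.1 := by simp [hpair]
               have m2 : p' ∈ pairQ.1 := by simp [hpair]
               erw [← legQ_eq pairQ m1, ← legQ_eq pairQ m2, ← Category.assoc,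
                 S.csLeg_nat pairQ.1 m1 m2 (leOfHom f)] } } with hzc
  refine ⟨S.pres.isColimit.desc zc, ?_, ?_⟩
  · intro Ss
    show S.rS Ss.1 ≫ S.pres.isColimit.desc zc = ψ.ι.app Ss
    apply S.G_hom_ext
    intro T
    rw [← Category.assoc, S.Gι_rS]
    apply S.aC_hom_ext T.1
    intro pp hp
    erw [← Category.assoc, S.rho_fac, S.pres.isColimit.fac zc pp, ← Category.assoc,
      S.csLeg_eq T hp, legQ_eq Ss (T.2 hp)]
  · intro m hm
    apply IsColimit.hom_ext S.pres.isColimit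
    intro pp
    have hm'' : S.rS (S.singletonQ pp).1 ≫ m = ψ.ι.app (S.singletonQ pp) :=
      hm (S.singletonQ pp)
    have h1 : S.pres.cocone.ι.app pp =
        S.csLeg (S.singletonQ pp).1 rfl ≫ S.rS (S.singletonQ pp).1 :=
      (S.csLeg_rS (show pp ∈ (S.singletonQ pp).1 from rfl)).symm
    erw [S.pres.isColimit.fac zc pp, h1, Category.assoc, hm'']
    rfl

end Setup

end MainConstruction

end Aux

/-- Let `κ ≤ λ` be regular cardinals and `A` a small category with `κ`-small colimits.
Modelling `C = Ind_κ(A)` as a category with `κ`-directed colimits, receiving a fully faithful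
functor `ι : A ⥤ C` with `κ`-compact values, such that every object of `C` is a `κ`-directed
colimit of objects of `A`: every `λ`-compact object of `C` is a retract of a colimit of a
`λ`-small diagram with values in (the image of) `A`. -/



theorem stmt17 (κ lam : Cardinal.{v}) (hκ : κ.IsRegular) (hlam : lam.IsRegular)
    (hκlam : κ ≤ lam)
    {A : Type v} [SmallCategory A]
    (hA : ∀ (J : Type v) (_ : SmallCategory J), #J < κ → #(Arrow J) < κ →
      HasColimitsOfShape J A)
    {C : Type u} [Category.{v} C]
    (hcolim : ∀ (P : Type v) (_ : PartialOrder P), KDirected κ P → HasColimitsOfShape P C)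
    (ι : A ⥤ C) [ι.Full] [ι.Faithful]
    (hcpt : ∀ a : A, IsKappaCompact κ (ι.obj a))
    (hgen : ∀ Y : C, Nonempty (IndPresentation κ ι Y))
    (X : C) (hX : IsKappaCompact lam X) :
    Nonempty (SmallRetractPresentation lam ι X) := by
  obtain ⟨pres⟩ := hgen X
  let S : Aux.Setup κ lam ι :=
    { hκ := hκ, hlam := hlam, hA := hA, hcolim := hcolim, hcpt := hcpt, hgen := hgen,
      X := X, pres := pres }
  haveI := (hX S.Q inferInstance S.Q_directed).some
  obtain ⟨Ss, s₀, hs⟩ := Aux.factor_through_stage (W := X) S.cQIsColimit S.pres.iso.inv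
  exact ⟨{ J := ↥Ss.1
           small_obj := Ss.2
           small_hom := Aux.arrow_card_lt hlam.aleph0_le _ Ss.2
           diag := S.dT Ss.1
           cocone := S.cs Ss.1
           isColimit := S.csIsColimit Ss.1
           s := s₀
           r := S.rS Ss.1 ≫ S.pres.iso.hom
           retract := by
             erw [← Category.assoc, show s₀ ≫ S.rS Ss.1 = S.pres.iso.inv from hs,
               Iso.inv_hom_id] }⟩
end
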